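/- Let N > 0, α ∈ ℂ, and let z be a real number with z < (N+1)/N. Then (1/(π·N))·∫_ℂ exp(−|γ|²/N)·exp(−|γ+α|²·(1−z)) dγ = (1/(N+1−N·z))·exp(−|α|²·(1−z)/(N+1−N·z)), where the integral is over ℂ identified with ℝ² carrying Lebesgue measure. -/

import Mathlib

open MeasureTheory Real

lemma gaussian_integral_complex {a : ℝ} (ha : 0 < a) :
    ∫ γ : ℂ, Real.exp (-a * (‖γ‖) ^ 2) = Real.pi / a := by
  have h := (Complex.volume_preserving_equiv_real_prod.symm).integral_comp
      Complex.measurableEquivRealProd.symm.measurableEmbedding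
      (fun γ : ℂ => Real.exp (-a * (‖γ‖) ^ 2))
  rw [← h]
  have key : ∀ p : ℝ × ℝ,
      Real.exp (-a * (‖Complex.measurableEquivRealProd.symm p‖) ^ 2)
        = Real.exp (-a * p.1 ^ 2) * Real.exp (-a * p.2 ^ 2) := by
    intro p
    rw [← Real.exp_add]
    congr 1
    rw [Complex.sq_norm, Complex.normSq_apply]
    simp
    ring
  simp_rw [key]
  have h2 : ∫ p : ℝ × ℝ, Real.exp (-a * p.1 ^ 2) * Real.exp (-a * p.2 ^ 2)
      = (∫ x : ℝ, Real.exp (-a * x ^ 2)) * ∫ x : ℝ, Real.exp (-a * x ^ 2) := by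
    rw [Measure.volume_eq_prod]
    exact integral_prod_mul (fun x : ℝ => Real.exp (-a * x ^ 2))
      (fun x : ℝ => Real.exp (-a * x ^ 2))
  rw [h2, integral_gaussian]
  exact Real.mul_self_sqrt (by positivity)

/-- Closed form of the probability generating function of a displaced thermal state:
`(1/(πN))·∫_ℂ e^{−|γ|²/N} e^{−|γ+α|²(1−z)} dγ
  = (1/(N+1−Nz))·exp(−|α|²(1−z)/(N+1−Nz))` for `z < (N+1)/N`. -/
theorem displaced_thermal_pgf_integral (N : ℝ) (hN : 0 < N) (α : ℂ) (z : ℝ)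
    (hz : z < (N + 1) / N) :
    (1 / (Real.pi * N)) *
      ∫ γ : ℂ, Real.exp (-(‖γ‖) ^ 2 / N) *
        Real.exp (-(‖γ + α‖) ^ 2 * (1 - z))
    = (1 / (N + 1 - N * z)) *
        Real.exp (-(‖α‖) ^ 2 * (1 - z) / (N + 1 - N * z)) := by
  have hN0 : N ≠ 0 := ne_of_gt hN
  set D : ℝ := N + 1 - N * z with hD_def
  have hD : 0 < D := by
    have h2 : z * N < N + 1 := (lt_div_iff₀ hN).mp hz
    rw [hD_def]; nlinarith
  have hD0 : D ≠ 0 := ne_of_gt hD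
  set a : ℝ := D / N with ha_def
  have ha : 0 < a := div_pos hD hN
  have ha0 : a ≠ 0 := ne_of_gt ha
  set c : ℂ := ((N * (1 - z) / D : ℝ) : ℂ) * α with hc_def
  have key : ∀ γ : ℂ,
      Real.exp (-(‖γ‖) ^ 2 / N) * Real.exp (-(‖γ + α‖) ^ 2 * (1 - z))
        = Real.exp (-(‖α‖) ^ 2 * (1 - z) / D) *
            Real.exp (-a * (‖γ + c‖) ^ 2) := by
    intro γ
    rw [← Real.exp_add, ← Real.exp_add]
    congr 1
    rw [Complex.sq_norm, Complex.sq_norm, Complex.sq_norm, Complex.sq_norm,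
      Complex.normSq_apply, Complex.normSq_apply, Complex.normSq_apply, Complex.normSq_apply]
    simp only [hc_def, Complex.add_re, Complex.add_im, Complex.mul_re, Complex.mul_im,
      Complex.ofReal_re, Complex.ofReal_im, ha_def, hD_def]
    have hD0' : N + 1 - N * z ≠ 0 := hD_def ▸ hD0
    field_simp
    ring
  simp_rw [key]
  rw [integral_const_mul]
  have htrans : ∫ γ : ℂ, Real.exp (-a * (‖γ + c‖) ^ 2)
      = ∫ γ : ℂ, Real.exp (-a * (‖γ‖) ^ 2) :=
    integral_add_right_eq_self (fun γ => Real.exp (-a * (‖γ‖) ^ 2)) c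
  rw [htrans, gaussian_integral_complex ha, ha_def]
  have hπ : Real.pi ≠ 0 := Real.pi_ne_zero
  field_simp
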